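/- arXiv:1311.0711 — 6 statements merged into one kernel-verified Lean document; each statement's English description precedes it below -/
import Mathlib

section
/- Acyclicity is preserved by arrow subdivision: let B : n → n → ℤ be skew-symmetric and acyclic, and let t, h ∈ n be distinct with B t h ≥ 1. Let B' be the skew-symmetric matrix on n ⊕ {v} defined by B' i j = B i j for i, j ∈ n with {i, j} ≠ {t, h}; B' t h = B t h − 1, B' h t = −(B t h − 1); B' t v = 1, B' v h = 1, B' v t = −1, B' h v = −1; and B' i v = B' v i = 0 for all other i ∈ n. Then B' is acyclic. -/
/-- A skew-symmetric integer matrix encoding a quiver without loops or 2-cycles. -/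
def SkewSymm {n : Type*} (B : n → n → ℤ) : Prop := ∀ i j, B i j = -B j i

/-- `v : Fin (m+1) → n` is an oriented path of length `m`:
`B (v r) (v (r+1)) > 0` for all `r`. -/
def IsPath {n : Type*} (B : n → n → ℤ) (m : ℕ) (v : Fin (m + 1) → n) : Prop :=
  ∀ r : Fin m, 0 < B (v r.castSucc) (v r.succ)

/-- `B` is acyclic: no oriented path of positive length from a vertex to itself. -/
def Acyclic {n : Type*} (B : n → n → ℤ) : Prop :=
  ¬ ∃ (m : ℕ) (v : Fin (m + 1) → n), 1 ≤ m ∧ IsPath B m v ∧ v 0 = v (Fin.last m)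

/-- `B` is bipartite: each vertex is a source or a sink. -/
def Bipartite {n : Type*} (B : n → n → ℤ) : Prop :=
  ∀ k, (∀ j, 0 ≤ B k j) ∨ (∀ j, B k j ≤ 0)

/-- The Fomin–Zelevinsky mutation of `B` at vertex `k`. -/
def mutate {n : Type*} [DecidableEq n] (B : n → n → ℤ) (k : n) : n → n → ℤ :=
  fun i j =>
    if i = k ∨ j = k then -B i j
    else B i j + max (B i k) 0 * max (B k j) 0 - max (-B i k) 0 * max (-B k j) 0

/-- A maximal oriented path: it cannot be extended at either end. -/
def IsMaxPath {n : Type*} (B : n → n → ℤ) (m : ℕ) (v : Fin (m + 1) → n) : Prop :=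
  IsPath B m v ∧ (¬ ∃ u, 0 < B u (v 0)) ∧ ¬ ∃ w, 0 < B (v (Fin.last m)) w

/-- The matrix `B̃` on `n ⊕ Unit` obtained from `B` by adding a new vertex `v`
with arrows `h(α) → v` and `v → t(α)` (here `t = t(α)`, `h = h(α)`). -/
def extendQ {n : Type*} [DecidableEq n] (B : n → n → ℤ) (t h : n) :
    (n ⊕ Unit) → (n ⊕ Unit) → ℤ
  | Sum.inl i, Sum.inl j => B i j
  | Sum.inl i, Sum.inr _ => if i = h then 1 else if i = t then -1 else 0
  | Sum.inr _, Sum.inl j => if j = t then 1 else if j = h then -1 else 0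
  | Sum.inr _, Sum.inr _ => 0

/-- The matrix on `n ⊕ Unit` obtained from `B` by subdividing one arrow from
`t` to `h` through the new vertex `v`. -/
def subdividedQ {n : Type*} [DecidableEq n] (B : n → n → ℤ) (t h : n) :
    (n ⊕ Unit) → (n ⊕ Unit) → ℤ
  | Sum.inl i, Sum.inl j =>
      if i = t ∧ j = h then B t h - 1
      else if i = h ∧ j = t then -(B t h - 1)
      else B i j
  | Sum.inl i, Sum.inr _ => if i = t then 1 else if i = h then -1 else 0
  | Sum.inr _, Sum.inl j => if j = h then 1 else if j = t then -1 else 0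
  | Sum.inr _, Sum.inr _ => 0

private lemma isPath_transGen {n : Type*} (B : n → n → ℤ) (m : ℕ) (v : Fin (m+1) → n)
    (hp : IsPath B m v) (hm : 1 ≤ m) :
    Relation.TransGen (fun i j => 0 < B i j) (v 0) (v (Fin.last m)) := by
  have key : ∀ k : ℕ, ∀ hk : k ≤ m,
      Relation.ReflTransGen (fun i j => 0 < B i j) (v 0) (v ⟨k, by omega⟩) := by
    intro k
    induction k with
    | zero => intro _; exact Relation.ReflTransGen.refl
    | succ k ih =>
      intro hk
      have step := hp ⟨k, by omega⟩
      exact (ih (by omega)).tail step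
  have h1 := key (m - 1) (by omega)
  have step := hp ⟨m - 1, by omega⟩
  have hlast : (⟨m - 1, by omega⟩ : Fin m).succ = Fin.last m := by
    apply Fin.ext; simp; omega
  have hcast : (⟨m - 1, by omega⟩ : Fin m).castSucc = (⟨m - 1, by omega⟩ : Fin (m+1)) := by
    apply Fin.ext; simp
  rw [hlast, hcast] at step
  exact Relation.TransGen.tail' h1 step

private lemma acyclic_no_transGen {n : Type*} (B : n → n → ℤ) (hacyc : Acyclic B)
    (a : n) : ¬ Relation.TransGen (fun i j => 0 < B i j) a a := by
  intro hcyc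
  obtain ⟨c, hac, hcb⟩ := Relation.TransGen.head'_iff.mp hcyc
  obtain ⟨l, hchain, hlastl⟩ := List.exists_isChain_cons_of_relationReflTransGen hcb
  set L : List n := a :: c :: l with hL
  have hchain' : List.IsChain (fun i j => 0 < B i j) L := by
    rw [hL, List.isChain_cons]
    constructor
    · rintro y hy
      simp only [List.head?_cons, Option.mem_def, Option.some.injEq] at hy
      subst hy; exact hac
    · exact hchain
  set m : ℕ := l.length + 1 with hm
  have hLlen : L.length = m + 1 := by simp [hL, hm]
  refine hacyc ⟨m, fun i => L.get ⟨i.val, by omega⟩, by omega, ?_, ?_⟩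
  · intro r
    have := List.isChain_iff_getElem.mp hchain' r.val (by omega)
    simpa using this
  · show L.get ⟨(0 : Fin (m+1)).val, by omega⟩ = L.get ⟨(Fin.last m).val, by omega⟩
    have h3 : a = L.get ⟨m, by omega⟩ := by
      show a = (a :: c :: l).get ⟨l.length + 1, by simp⟩
      rw [← hlastl, List.getLast_eq_getElem]
      simp
    simp only [Fin.val_zero, Fin.val_last]
    calc L.get ⟨0, by omega⟩ = a := rfl
    _ = L.get ⟨m, by omega⟩ := h3

/-- Acyclicity is preserved by arrow subdivision. -/
theorem stmt_2 {n : Type*} [DecidableEq n] (B : n → n → ℤ) (t h : n)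
    (hskew : SkewSymm B) (hacyc : Acyclic B) (hth : t ≠ h) (hpos : 1 ≤ B t h) :
    Acyclic (subdividedQ B t h) := by
  rintro ⟨m, v, hm, hp, hcyc⟩
  have htrans := isPath_transGen _ m v hp hm
  rw [hcyc] at htrans
  set a := v (Fin.last m) with ha
  let φ : n ⊕ Unit → n := fun x => Sum.elim id (fun _ => h) x
  have step : ∀ x y, 0 < subdividedQ B t h x y →
      0 < B (φ x) (φ y) ∨ (x = Sum.inr () ∧ y = Sum.inl h) := by
    rintro (i | u) (j | w) hxy
    · simp only [subdividedQ] at hxy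
      by_cases h1 : i = t ∧ j = h
      · rw [if_pos h1] at hxy
        left
        show 0 < B (φ (Sum.inl i)) (φ (Sum.inl j))
        simp only [φ, Sum.elim_inl, id]
        rw [h1.1, h1.2]; omega
      · rw [if_neg h1] at hxy
        by_cases h2 : i = h ∧ j = t
        · rw [if_pos h2] at hxy; omega
        · rw [if_neg h2] at hxy; left; exact hxy
    · simp only [subdividedQ] at hxy
      left
      split_ifs at hxy with h1 h2
      · show 0 < B (φ (Sum.inl i)) (φ (Sum.inr w))
        simp only [φ, Sum.elim_inl, Sum.elim_inr, id]
        rw [h1]; omega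
      · omega
      · omega
    · simp only [subdividedQ] at hxy
      split_ifs at hxy with h1 h2
      · right; exact ⟨by cases u; rfl, by rw [h1]⟩
      · omega
      · omega
    · simp only [subdividedQ] at hxy; omega
  have main : ∀ x y, Relation.TransGen (fun x y => 0 < subdividedQ B t h x y) x y →
      Relation.TransGen (fun i j => 0 < B i j) (φ x) (φ y) ∨
        (x = Sum.inr () ∧ y = Sum.inl h) := by
    intro x y hxy
    induction hxy with
    | single hstep => exact (step _ _ hstep).imp Relation.TransGen.single id
    | @tail b c hxb hstep ih =>
      rcases step _ _ hstep with hs | ⟨rfl, rfl⟩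
      · rcases ih with ih | ⟨rfl, rfl⟩
        · exact Or.inl (ih.tail hs)
        · exact Or.inl (Relation.TransGen.single hs)
      · rcases ih with ih | ⟨rfl, h2⟩
        · exact Or.inl ih
        · exact absurd h2 (by simp)
  rcases main a a htrans with hcon | ⟨h1, h2⟩
  · exact acyclic_no_transGen B hacyc (φ a) hcon
  · rw [h1] at h2; exact absurd h2 (by simp)
end

section
/- Subdividing an arrow that lies on no maximal-length path preserves the maximal path length: let B : n → n → ℤ be skew-symmetric and acyclic on a finite type n, let ℓ ≥ 1 be the maximum length of an oriented path of B, and let t, h ∈ n be distinct with B t h ≥ 1 such that no oriented path v_0, …, v_ℓ of length ℓ has (v_r, v_{r+1}) = (t, h) for some r. Let B' be the skew-symmetric matrix on n ⊕ {v} defined by B' i j = B i j for i, j ∈ n with {i, j} ≠ {t, h}; B' t h = B t h − 1, B' h t = −(B t h − 1); B' t v = 1, B' v h = 1, B' v t = −1, B' h v = −1; and B' i v = B' v i = 0 for all other i ∈ n. Then the maximum length of an oriented path of B' is also ℓ. -/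
lemma subQ_inl_inl {n : Type*} [DecidableEq n] {B : n → n → ℤ} {t h i j : n}
    (hpos : 1 ≤ B t h)
    (hp : 0 < subdividedQ B t h (Sum.inl i) (Sum.inl j)) : 0 < B i j := by
  simp only [subdividedQ] at hp
  split_ifs at hp with h1 h2
  · obtain ⟨rfl, rfl⟩ := h1; linarith
  · linarith
  · exact hp

lemma subQ_to_inr {n : Type*} [DecidableEq n] {B : n → n → ℤ} {t h : n} {x : n ⊕ Unit} {u : Unit}
    (hp : 0 < subdividedQ B t h x (Sum.inr u)) : x = Sum.inl t := by
  cases x with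
  | inl i =>
    simp only [subdividedQ] at hp
    split_ifs at hp with h1 h2
    · rw [h1]
    · linarith
    · linarith
  | inr v => simp [subdividedQ] at hp

lemma subQ_from_inr {n : Type*} [DecidableEq n] {B : n → n → ℤ} {t h : n} {y : n ⊕ Unit} {u : Unit}
    (hp : 0 < subdividedQ B t h (Sum.inr u) y) : y = Sum.inl h := by
  cases y with
  | inl j =>
    simp only [subdividedQ] at hp
    split_ifs at hp with h1 h2
    · rw [h1]
    · linarith
    · linarith
  | inr v => simp [subdividedQ] at hp

lemma subQ_once {n : Type*} [DecidableEq n] {B : n → n → ℤ} {t h : n}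
    (hacyc : Acyclic B) (hth : t ≠ h) (hpos : 1 ≤ B t h)
    {m : ℕ} (W : ℕ → n ⊕ Unit)
    (hedge : ∀ k, k < m → 0 < subdividedQ B t h (W k) (W (k+1))) :
    ∀ b, ¬ (W b = Sum.inr () ∧ b ≤ m ∧ ∃ a, a < b ∧ W a = Sum.inr ()) := by
  intro b
  induction b using Nat.strong_induction_on with
  | _ b IH =>
    rintro ⟨hb, hbm, a, hab, ha⟩
    by_cases hmid : ∃ r, a < r ∧ r < b ∧ W r = Sum.inr ()
    · obtain ⟨r, h1, h2, h3⟩ := hmid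
      exact IH r h2 ⟨h3, by omega, a, h1, ha⟩
    · have hinl : ∀ r, a < r → r < b → ∃ x, W r = Sum.inl x := by
        intro r h1 h2
        rcases hx : W r with x | u
        · exact ⟨x, rfl⟩
        · cases u; exact absurd ⟨r, h1, h2, hx⟩ hmid
      have ham : a < m := by omega
      have hWa1 : W (a+1) = Sum.inl h := by
        have := hedge a ham
        rw [ha] at this
        exact subQ_from_inr this
      have hWb1 : W (b-1) = Sum.inl t := by
        have := hedge (b-1) (by omega)
        rw [show b - 1 + 1 = b by omega, hb] at this
        exact subQ_to_inr this
      have hne1 : a + 1 < b := by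
        rcases Nat.lt_or_ge (a+1) b with h' | h'
        · exact h'
        · exfalso
          have : a + 1 = b := by omega
          rw [this, hb] at hWa1
          exact absurd hWa1 (by simp)
      have hne2 : a + 1 < b - 1 := by
        rcases Nat.lt_or_ge (a+1) (b-1) with h' | h'
        · exact h'
        · exfalso
          have : a + 1 = b - 1 := by omega
          rw [this, hWb1] at hWa1
          exact hth (Sum.inl.inj hWa1)
      set M := b - a - 1 with hM
      have hM2 : 2 ≤ M := by omega
      set E : n ⊕ Unit → n := Sum.elim id (fun _ => t) with hEdef
      set g : ℕ → n := fun k => if k = M then h else E (W (a+1+k)) with hg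
      have hg1 : ∀ k, k ≠ M → g k = E (W (a+1+k)) := by
        intro k hk; simp only [hg]; rw [if_neg hk]
      have hg2 : g M = h := by simp [hg]
      apply hacyc
      refine ⟨M, fun r => g r.val, by omega, ?_, ?_⟩
      · intro r
        have hrM : r.val < M := r.isLt
        show 0 < B (g r.castSucc.val) (g r.succ.val)
        rw [Fin.coe_castSucc, Fin.val_succ]
        by_cases hr : r.val + 1 = M
        · rw [hg1 r.val (by omega), hr, hg2,
            show a + 1 + r.val = b - 1 by omega, hWb1]
          simp only [hEdef, Sum.elim_inl, id]
          linarith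
        · obtain ⟨x, hx⟩ := hinl (a+1+r.val) (by omega) (by omega)
          obtain ⟨y, hy⟩ := hinl (a+1+(r.val+1)) (by omega) (by omega)
          have he := hedge (a+1+r.val) (by omega)
          rw [show a+1+r.val+1 = a+1+(r.val+1) by omega, hx, hy] at he
          rw [hg1 r.val (by omega), hg1 (r.val+1) hr, hx, hy]
          simp only [hEdef, Sum.elim_inl, id]
          exact subQ_inl_inl hpos he
      · show g (0 : Fin (M+1)).val = g (Fin.last M).val
        rw [Fin.val_zero, Fin.val_last, hg2, hg1 0 (by omega)]
        rw [show a + 1 + 0 = a + 1 by omega, hWa1]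
        simp [hEdef]

/-- Subdividing an arrow lying on no maximal-length oriented path preserves
the maximal path length. -/
theorem stmt_3 {n : Type*} [Fintype n] [DecidableEq n] (B : n → n → ℤ) (t h : n)
    (ℓ : ℕ) (hskew : SkewSymm B) (hacyc : Acyclic B)
    (hℓ : 1 ≤ ℓ)
    (hmaxex : ∃ v : Fin (ℓ + 1) → n, IsPath B ℓ v)
    (hmaxub : ∀ (m : ℕ) (v : Fin (m + 1) → n), IsPath B m v → m ≤ ℓ)
    (hth : t ≠ h) (hpos : 1 ≤ B t h)
    (hnot : ¬ ∃ v : Fin (ℓ + 1) → n, IsPath B ℓ v ∧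
      ∃ r : Fin ℓ, v r.castSucc = t ∧ v r.succ = h) :
    (∃ v : Fin (ℓ + 1) → n ⊕ Unit, IsPath (subdividedQ B t h) ℓ v) ∧
      ∀ (m : ℕ) (v : Fin (m + 1) → n ⊕ Unit), IsPath (subdividedQ B t h) m v → m ≤ ℓ := by
  constructor
  · obtain ⟨v, hv⟩ := hmaxex
    refine ⟨fun r => Sum.inl (v r), ?_⟩
    intro r
    have hvr := hv r
    show 0 < subdividedQ B t h (Sum.inl (v r.castSucc)) (Sum.inl (v r.succ))
    simp only [subdividedQ]
    split_ifs with h1 h2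
    · exact absurd ⟨v, hv, r, h1.1, h1.2⟩ hnot
    · rw [h2.1, h2.2] at hvr
      have := hskew h t
      linarith
    · exact hvr
  · intro m w hw
    by_cases hm0 : m = 0
    · omega
    have hmlt : ∀ k : ℕ, min k m < m + 1 := fun k => Nat.lt_succ_of_le (min_le_right _ _)
    set W : ℕ → n ⊕ Unit := fun k => w ⟨min k m, hmlt k⟩ with hWdef
    have hW : ∀ k (hk : k ≤ m), W k = w ⟨k, by omega⟩ := by
      intro k hk
      simp only [hWdef]
      congr 1
      exact Fin.ext (Nat.min_eq_left hk)
    have hedge : ∀ k, k < m → 0 < subdividedQ B t h (W k) (W (k+1)) := by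
      intro k hk
      rw [hW k (by omega), hW (k+1) (by omega)]
      exact hw ⟨k, hk⟩
    set E : n ⊕ Unit → n := Sum.elim id (fun _ => t) with hEdef
    by_cases hocc : ∃ s, s ≤ m ∧ W s = Sum.inr ()
    case neg =>
      have hinl : ∀ k, k ≤ m → ∃ x, W k = Sum.inl x := by
        intro k hk
        rcases hx : W k with x | u
        · exact ⟨x, rfl⟩
        · cases u; exact absurd ⟨k, hk, hx⟩ hocc
      refine hmaxub m (fun r => E (W r.val)) ?_
      intro r
      have hrlt := r.isLt
      show 0 < B (E (W r.castSucc.val)) (E (W r.succ.val))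
      rw [Fin.coe_castSucc, Fin.val_succ]
      obtain ⟨x, hx⟩ := hinl r.val (by omega)
      obtain ⟨y, hy⟩ := hinl (r.val+1) (by omega)
      have he := hedge r.val hrlt
      rw [hx, hy] at he
      rw [hx, hy]
      simp only [hEdef, Sum.elim_inl, id]
      exact subQ_inl_inl hpos he
    case pos =>
      obtain ⟨s, hsm, hs⟩ := hocc
      have huniq : ∀ k, k ≤ m → W k = Sum.inr () → k = s := by
        intro k hk hkr
        by_contra hne
        rcases Nat.lt_or_ge k s with h' | h'
        · exact subQ_once hacyc hth hpos W hedge s ⟨hs, hsm, k, h', hkr⟩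
        · exact subQ_once hacyc hth hpos W hedge k ⟨hkr, hk, s, by omega, hs⟩
      have hinl : ∀ k, k ≤ m → k ≠ s → ∃ x, W k = Sum.inl x := by
        intro k hk hks
        rcases hx : W k with x | u
        · exact ⟨x, rfl⟩
        · cases u; exact absurd (huniq k hk hx) hks
      by_cases hs0 : s = 0
      · subst hs0
        have hW1 : W 1 = Sum.inl h := by
          have := hedge 0 (by omega)
          rw [hs] at this
          exact subQ_from_inr this
        set g : ℕ → n := fun k => if k = 0 then t else E (W k) with hg
        have hg1 : g 0 = t := by simp [hg]
        have hg2 : ∀ k, k ≠ 0 → g k = E (W k) := by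
          intro k hk; simp only [hg]; rw [if_neg hk]
        refine hmaxub m (fun r => g r.val) ?_
        intro r
        have hrlt := r.isLt
        show 0 < B (g r.castSucc.val) (g r.succ.val)
        rw [Fin.coe_castSucc, Fin.val_succ]
        by_cases hr0 : r.val = 0
        · rw [hr0, hg1, hg2 1 (by omega), hW1]
          simp only [hEdef, Sum.elim_inl, id]
          linarith
        · obtain ⟨x, hx⟩ := hinl r.val (by omega) hr0
          obtain ⟨y, hy⟩ := hinl (r.val+1) (by omega) (by omega)
          have he := hedge r.val hrlt
          rw [hx, hy] at he
          rw [hg2 r.val hr0, hg2 (r.val+1) (by omega), hx, hy]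
          simp only [hEdef, Sum.elim_inl, id]
          exact subQ_inl_inl hpos he
      · by_cases hsm' : s = m
        · subst hsm'
          have hWm1 : W (s-1) = Sum.inl t := by
            have := hedge (s-1) (by omega)
            rw [show s - 1 + 1 = s by omega, hs] at this
            exact subQ_to_inr this
          set g : ℕ → n := fun k => if k = s then h else E (W k) with hg
          have hg1 : g s = h := by simp [hg]
          have hg2 : ∀ k, k ≠ s → g k = E (W k) := by
            intro k hk; simp only [hg]; rw [if_neg hk]
          refine hmaxub s (fun r => g r.val) ?_
          intro r
          have hrlt := r.isLt
          show 0 < B (g r.castSucc.val) (g r.succ.val)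
          rw [Fin.coe_castSucc, Fin.val_succ]
          by_cases hrm : r.val + 1 = s
          · rw [hrm, hg1, hg2 r.val (by omega), show r.val = s - 1 by omega, hWm1]
            simp only [hEdef, Sum.elim_inl, id]
            linarith
          · obtain ⟨x, hx⟩ := hinl r.val (by omega) (by omega)
            obtain ⟨y, hy⟩ := hinl (r.val+1) (by omega) hrm
            have he := hedge r.val hrlt
            rw [hx, hy] at he
            rw [hg2 r.val (by omega), hg2 (r.val+1) hrm, hx, hy]
            simp only [hEdef, Sum.elim_inl, id]
            exact subQ_inl_inl hpos he
        · -- 0 < s < m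
          have hs1 : 1 ≤ s := by omega
          have hsm2 : s < m := by omega
          have hWs1 : W (s-1) = Sum.inl t := by
            have := hedge (s-1) (by omega)
            rw [show s - 1 + 1 = s by omega, hs] at this
            exact subQ_to_inr this
          have hWs2 : W (s+1) = Sum.inl h := by
            have := hedge s hsm2
            rw [hs] at this
            exact subQ_from_inr this
          obtain ⟨m', rfl⟩ : ∃ m', m = m' + 1 := ⟨m - 1, by omega⟩
          set g : ℕ → n := fun k => if k < s then E (W k) else E (W (k+1)) with hg
          have hg1 : ∀ k, k < s → g k = E (W k) := by
            intro k hk; simp only [hg]; rw [if_pos hk]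
          have hg2 : ∀ k, ¬ (k < s) → g k = E (W (k+1)) := by
            intro k hk; simp only [hg]; rw [if_neg hk]
          have hupath : IsPath B m' (fun r => g r.val) := by
            intro r
            have hrlt := r.isLt
            show 0 < B (g r.castSucc.val) (g r.succ.val)
            rw [Fin.coe_castSucc, Fin.val_succ]
            rcases lt_trichotomy (r.val+1) s with hlt | heq | hgt
            · obtain ⟨x, hx⟩ := hinl r.val (by omega) (by omega)
              obtain ⟨y, hy⟩ := hinl (r.val+1) (by omega) (by omega)
              have he := hedge r.val (by omega)
              rw [hx, hy] at he
              rw [hg1 r.val (by omega), hg1 (r.val+1) hlt, hx, hy]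
              simp only [hEdef, Sum.elim_inl, id]
              exact subQ_inl_inl hpos he
            · rw [hg1 r.val (by omega), hg2 (r.val+1) (by omega),
                show r.val = s - 1 by omega, show s - 1 + 1 + 1 = s + 1 by omega,
                hWs1, hWs2]
              simp only [hEdef, Sum.elim_inl, id]
              linarith
            · obtain ⟨x, hx⟩ := hinl (r.val+1) (by omega) (by omega)
              obtain ⟨y, hy⟩ := hinl (r.val+1+1) (by omega) (by omega)
              have he := hedge (r.val+1) (by omega)
              rw [hx, hy] at he
              rw [hg2 r.val (by omega), hg2 (r.val+1) (by omega), hx, hy]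
              simp only [hEdef, Sum.elim_inl, id]
              exact subQ_inl_inl hpos he
          have hle : m' ≤ ℓ := hmaxub m' _ hupath
          rcases lt_or_eq_of_le hle with hlt | heq
          · omega
          · exfalso
            subst heq
            apply hnot
            refine ⟨fun r => g r.val, hupath, ⟨s-1, by omega⟩, ?_, ?_⟩
            · show g (s-1) = t
              rw [hg1 (s-1) (by omega), hWs1]
              rfl
            · show g (s-1+1) = h
              rw [show s - 1 + 1 = s by omega, hg2 s (by omega), hWs2]
              rfl
end

section
/- If every arrow lies on a maximal-length path, then all maximal oriented paths have the same length: let B : n → n → ℤ be skew-symmetric and acyclic on a finite type n, let ℓ ≥ 1 be the maximum length of an oriented path of B, and suppose every pair (t, h) with B t h > 0 lies on some oriented path of length ℓ (i.e., there is a path v_0, …, v_ℓ with (v_r, v_{r+1}) = (t, h) for some r). Then every maximal oriented path of B has length exactly ℓ, where an oriented path v_0, …, v_m is maximal if there is no vertex u with B u v_0 > 0 and no vertex w with B v_m w > 0. -/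
namespace Stmt5Aux

attribute [local instance] Classical.propDecidable

variable {n : Type*}

def IsPath' (B : n → n → ℤ) (m : ℕ) (v : ℕ → n) : Prop :=
  ∀ r, r < m → 0 < B (v r) (v (r + 1))

lemma isPath_of_isPath' {B : n → n → ℤ} {m : ℕ} {v : ℕ → n} (h : IsPath' B m v) :
    IsPath B m (fun i => v i.val) := by
  intro r
  simpa using h r.val r.isLt

lemma length_le {B : n → n → ℤ} {ℓ : ℕ}
    (hub : ∀ (m : ℕ) (v : Fin (m + 1) → n), IsPath B m v → m ≤ ℓ)
    {m : ℕ} {v : ℕ → n} (h : IsPath' B m v) : m ≤ ℓ :=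
  hub m _ (isPath_of_isPath' h)

def ext (m : ℕ) (w : Fin (m + 1) → n) : ℕ → n :=
  fun s => w ⟨min s m, Nat.lt_succ_of_le (Nat.min_le_right s m)⟩

lemma ext_eq {m : ℕ} (w : Fin (m + 1) → n) {s : ℕ} (hs : s ≤ m) :
    ext m w s = w ⟨s, by omega⟩ := by
  simp [ext, Nat.min_eq_left hs]

lemma toPath' {B : n → n → ℤ} {m : ℕ} {w : Fin (m+1) → n} (h : IsPath B m w) :
    IsPath' B m (ext m w) := by
  intro r hr
  rw [ext_eq w (by omega : r ≤ m), ext_eq w (by omega : r + 1 ≤ m)]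
  have h1 : (⟨r, by omega⟩ : Fin (m+1)) = (⟨r, hr⟩ : Fin m).castSucc := by
    ext; simp
  have h2 : (⟨r + 1, by omega⟩ : Fin (m+1)) = (⟨r, hr⟩ : Fin m).succ := by
    ext; simp
  rw [h1, h2]
  exact h ⟨r, hr⟩

def cat (p : ℕ) (a b : ℕ → n) : ℕ → n := fun r => if r ≤ p then a r else b (r - p)

lemma cat_isPath' {B : n → n → ℤ} {p q : ℕ} {a b : ℕ → n}
    (ha : IsPath' B p a) (hb : IsPath' B q b) (hab : b 0 = a p) :
    IsPath' B (p + q) (cat p a b) := by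
  intro r hr
  simp only [cat]
  rcases lt_trichotomy r p with h | h | h
  · rw [if_pos h.le, if_pos (by omega : r + 1 ≤ p)]
    exact ha r h
  · subst h
    rw [if_pos le_rfl, if_neg (by omega : ¬ r + 1 ≤ r),
      (by omega : r + 1 - r = 1), ← hab]
    exact hb 0 (by omega)
  · rw [if_neg (by omega), if_neg (by omega), (by omega : r + 1 - p = (r - p) + 1)]
    exact hb (r - p) (by omega)

lemma cat_last {p q : ℕ} {a b : ℕ → n} (hab : b 0 = a p) :
    cat p a b (p + q) = b q := by
  by_cases hq : q = 0
  · subst hq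
    simp [cat, hab]
  · rw [cat, if_neg (by omega)]
    congr 1
    omega

noncomputable def dIn (B : n → n → ℤ) (ℓ : ℕ) (x : n) : ℕ :=
  Nat.findGreatest (fun m => ∃ v : ℕ → n, IsPath' B m v ∧ v m = x) ℓ

noncomputable def dOut (B : n → n → ℤ) (ℓ : ℕ) (x : n) : ℕ :=
  Nat.findGreatest (fun m => ∃ v : ℕ → n, IsPath' B m v ∧ v 0 = x) ℓ

lemma dIn_spec (B : n → n → ℤ) (ℓ : ℕ) (x : n) :
    ∃ v : ℕ → n, IsPath' B (dIn B ℓ x) v ∧ v (dIn B ℓ x) = x := by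
  have := Nat.findGreatest_spec (P := fun m => ∃ v : ℕ → n, IsPath' B m v ∧ v m = x)
    (Nat.zero_le ℓ)
    (⟨fun _ => x, fun r hr => absurd hr (Nat.not_lt_zero r), rfl⟩ :
      ∃ v : ℕ → n, IsPath' B 0 v ∧ v 0 = x)
  exact this

lemma dOut_spec (B : n → n → ℤ) (ℓ : ℕ) (x : n) :
    ∃ v : ℕ → n, IsPath' B (dOut B ℓ x) v ∧ v 0 = x := by
  have := Nat.findGreatest_spec (P := fun m => ∃ v : ℕ → n, IsPath' B m v ∧ v 0 = x)
    (Nat.zero_le ℓ)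
    (⟨fun _ => x, fun r hr => absurd hr (Nat.not_lt_zero r), rfl⟩ :
      ∃ v : ℕ → n, IsPath' B 0 v ∧ v 0 = x)
  exact this

lemma le_dIn {B : n → n → ℤ} {ℓ m : ℕ} {x : n} (hm : m ≤ ℓ)
    (h : ∃ v : ℕ → n, IsPath' B m v ∧ v m = x) : m ≤ dIn B ℓ x :=
  Nat.le_findGreatest hm h

lemma le_dOut {B : n → n → ℤ} {ℓ m : ℕ} {x : n} (hm : m ≤ ℓ)
    (h : ∃ v : ℕ → n, IsPath' B m v ∧ v 0 = x) : m ≤ dOut B ℓ x :=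
  Nat.le_findGreatest hm h

def arrowPath (t h : n) : ℕ → n := fun r => if r = 0 then t else h

lemma arrowPath_isPath' {B : n → n → ℤ} {t h : n} (hth : 0 < B t h) :
    IsPath' B 1 (arrowPath t h) := by
  intro r hr
  interval_cases r
  simpa [arrowPath] using hth

lemma arrow_le {B : n → n → ℤ} {ℓ : ℕ}
    (hub : ∀ (m : ℕ) (v : Fin (m + 1) → n), IsPath B m v → m ≤ ℓ)
    {t h : n} (hth : 0 < B t h) :
    dIn B ℓ t + 1 + dOut B ℓ h ≤ ℓ := by
  obtain ⟨a, ha, hat⟩ := dIn_spec B ℓ t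
  obtain ⟨b, hb, hbh⟩ := dOut_spec B ℓ h
  have h1 : IsPath' B (dIn B ℓ t + 1) (cat (dIn B ℓ t) a (arrowPath t h)) :=
    cat_isPath' ha (arrowPath_isPath' hth) (by simp [arrowPath, hat])
  have hend : cat (dIn B ℓ t) a (arrowPath t h) (dIn B ℓ t + 1) = h := by
    rw [cat_last (by simp [arrowPath, hat])]
    simp [arrowPath]
  have h2 : IsPath' B (dIn B ℓ t + 1 + dOut B ℓ h)
      (cat (dIn B ℓ t + 1) (cat (dIn B ℓ t) a (arrowPath t h)) b) :=
    cat_isPath' h1 hb (by rw [hbh, hend])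
  exact length_le hub h2

lemma dIn_add_dOut_le {B : n → n → ℤ} {ℓ : ℕ}
    (hub : ∀ (m : ℕ) (v : Fin (m + 1) → n), IsPath B m v → m ≤ ℓ)
    (x : n) : dIn B ℓ x + dOut B ℓ x ≤ ℓ := by
  obtain ⟨a, ha, hax⟩ := dIn_spec B ℓ x
  obtain ⟨b, hb, hbx⟩ := dOut_spec B ℓ x
  exact length_le hub (cat_isPath' ha hb (by rw [hbx, hax]))

lemma arrow_ge {B : n → n → ℤ} {ℓ : ℕ}
    (harrow : ∀ t h : n, 0 < B t h →
      ∃ v : Fin (ℓ + 1) → n, IsPath B ℓ v ∧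
        ∃ r : Fin ℓ, v r.castSucc = t ∧ v r.succ = h)
    {t h : n} (hth : 0 < B t h) :
    ℓ ≤ dIn B ℓ t + dOut B ℓ h + 1 := by
  obtain ⟨w, hw, r, hrt, hrh⟩ := harrow t h hth
  have hrl : (r : ℕ) < ℓ := r.isLt
  have hw' : IsPath' B ℓ (ext ℓ w) := toPath' hw
  have hpre : (r : ℕ) ≤ dIn B ℓ t := by
    apply le_dIn (by omega)
    refine ⟨ext ℓ w, fun s hs => hw' s (by omega), ?_⟩
    rw [ext_eq w (by omega : (r : ℕ) ≤ ℓ)]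
    have h1 : (⟨(r : ℕ), by omega⟩ : Fin (ℓ+1)) = r.castSucc := by ext; simp
    rw [h1, hrt]
  have hsuf : ℓ - (r : ℕ) - 1 ≤ dOut B ℓ h := by
    apply le_dOut (by omega)
    refine ⟨fun s => ext ℓ w ((r : ℕ) + 1 + s), ?_, ?_⟩
    · intro s hs
      have e : (r : ℕ) + 1 + (s + 1) = ((r : ℕ) + 1 + s) + 1 := by omega
      show 0 < B (ext ℓ w ((r : ℕ) + 1 + s)) (ext ℓ w ((r : ℕ) + 1 + (s + 1)))
      rw [e]
      exact hw' ((r : ℕ) + 1 + s) (by omega)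
    · show ext ℓ w ((r : ℕ) + 1 + 0) = h
      rw [(by omega : (r : ℕ) + 1 + 0 = (r : ℕ) + 1), ext_eq w (by omega : (r : ℕ) + 1 ≤ ℓ)]
      have h2 : (⟨(r : ℕ) + 1, by omega⟩ : Fin (ℓ+1)) = r.succ := by ext; simp
      rw [h2, hrh]
  omega

lemma step {B : n → n → ℤ} {ℓ : ℕ}
    (hub : ∀ (m : ℕ) (v : Fin (m + 1) → n), IsPath B m v → m ≤ ℓ)
    (harrow : ∀ t h : n, 0 < B t h →
      ∃ v : Fin (ℓ + 1) → n, IsPath B ℓ v ∧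
        ∃ r : Fin ℓ, v r.castSucc = t ∧ v r.succ = h)
    {t h : n} (hth : 0 < B t h) :
    dIn B ℓ t + dOut B ℓ h + 1 = ℓ ∧ dIn B ℓ h = dIn B ℓ t + 1 := by
  have h1 := arrow_le hub hth
  have h2 := arrow_ge harrow hth
  have h3 : dIn B ℓ h + dOut B ℓ h ≤ ℓ := dIn_add_dOut_le hub h
  have h4 : dIn B ℓ t + 1 ≤ dIn B ℓ h := by
    apply le_dIn (by omega)
    obtain ⟨a, ha, hat⟩ := dIn_spec B ℓ t
    refine ⟨cat (dIn B ℓ t) a (arrowPath t h),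
      cat_isPath' ha (arrowPath_isPath' hth) (by simp [arrowPath, hat]), ?_⟩
    rw [cat_last (by simp [arrowPath, hat])]
    simp [arrowPath]
  exact ⟨by omega, by omega⟩

end Stmt5Aux


theorem Stmt5Aux.main {n : Type*} [Fintype n] (B : n → n → ℤ) (ℓ : ℕ)
    (hskew : SkewSymm B) (hℓ : 1 ≤ ℓ)
    (hmaxub : ∀ (m : ℕ) (v : Fin (m + 1) → n), IsPath B m v → m ≤ ℓ)
    (harrow : ∀ t h : n, 0 < B t h →
      ∃ v : Fin (ℓ + 1) → n, IsPath B ℓ v ∧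
        ∃ r : Fin ℓ, v r.castSucc = t ∧ v r.succ = h) :
    ∀ (m : ℕ) (v : Fin (m + 1) → n), 1 ≤ m →
      (IsPath B m v ∧ (¬ ∃ u, 0 < B u (v 0)) ∧ ¬ ∃ w, 0 < B (v (Fin.last m)) w) → m = ℓ := by
  intro m v hm hmax
  obtain ⟨hpath, hnoin, hnoout⟩ := hmax
  set W := Stmt5Aux.ext m v with hWdef
  have hW : Stmt5Aux.IsPath' B m W := Stmt5Aux.toPath' hpath
  have hW0 : W 0 = v 0 := by
    rw [hWdef, Stmt5Aux.ext_eq v (Nat.zero_le m)]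
    congr 1
  have hWm : W m = v (Fin.last m) := by
    rw [hWdef, Stmt5Aux.ext_eq v le_rfl]
    congr 1
  have hdin : ∀ r, r ≤ m → Stmt5Aux.dIn B ℓ (W r) = r := by
    intro r
    induction r with
    | zero =>
      intro _
      by_contra hne
      obtain ⟨a, ha, haend⟩ := Stmt5Aux.dIn_spec B ℓ (W 0)
      set d := Stmt5Aux.dIn B ℓ (W 0) with hdd
      have hd : 1 ≤ d := by omega
      refine hnoin ⟨a (d - 1), ?_⟩
      have h1 := ha (d - 1) (by omega)
      rw [(by omega : d - 1 + 1 = d), haend, hW0] at h1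
      exact h1
    | succ r ih =>
      intro hr
      have harr : 0 < B (W r) (W (r + 1)) := hW r (by omega)
      rw [(Stmt5Aux.step hmaxub harrow harr).2, ih (by omega)]
  have hdout : Stmt5Aux.dOut B ℓ (W m) = 0 := by
    by_contra hne
    obtain ⟨b, hb, hb0⟩ := Stmt5Aux.dOut_spec B ℓ (W m)
    have h1 := hb 0 (by omega)
    rw [hb0, hWm] at h1
    exact hnoout ⟨b 1, h1⟩
  have harr : 0 < B (W (m - 1)) (W m) := by
    have h1 := hW (m - 1) (by omega)
    rwa [(by omega : m - 1 + 1 = m)] at h1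
  have hkey := (Stmt5Aux.step hmaxub harrow harr).1
  rw [hdin (m - 1) (by omega), hdout] at hkey
  omega


/-- If every arrow lies on a maximal-length oriented path, then all maximal
oriented paths have the same length. -/
theorem stmt_5 {n : Type*} [Fintype n] (B : n → n → ℤ) (ℓ : ℕ)
    (hskew : SkewSymm B) (hacyc : Acyclic B) (hℓ : 1 ≤ ℓ)
    (hmaxex : ∃ v : Fin (ℓ + 1) → n, IsPath B ℓ v)
    (hmaxub : ∀ (m : ℕ) (v : Fin (m + 1) → n), IsPath B m v → m ≤ ℓ)
    (harrow : ∀ t h : n, 0 < B t h →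
      ∃ v : Fin (ℓ + 1) → n, IsPath B ℓ v ∧
        ∃ r : Fin ℓ, v r.castSucc = t ∧ v r.succ = h) :
    ∀ (m : ℕ) (v : Fin (m + 1) → n), 1 ≤ m → IsMaxPath B m v → m = ℓ := by
  intro m v hm hmax
  exact Stmt5Aux.main B ℓ hskew hℓ hmaxub harrow m v hm hmax
end

section
/- Mutation at a source preserves acyclicity: let B : n → n → ℤ be skew-symmetric and acyclic on a finite type n, and let s ∈ n be a source (B s j ≥ 0 for all j). Then μ_s(B) is acyclic. -/
/-- Mutation at a source preserves acyclicity. -/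
theorem stmt_7 {n : Type*} [Fintype n] [DecidableEq n] (B : n → n → ℤ) (s : n)
    (hskew : SkewSymm B) (hacyc : Acyclic B) (hsrc : ∀ j, 0 ≤ B s j) :
    Acyclic (mutate B s) := by
  rintro ⟨m, v, hm, hpath, hcyc⟩
  -- In the mutated matrix, s is a sink.
  have hsink : ∀ j, mutate B s s j ≤ 0 := by
    intro j
    simp only [mutate, true_or, if_true]
    linarith [hsrc j]
  by_cases hs : ∃ r : Fin (m + 1), v r = s
  · obtain ⟨r, hr⟩ := hs
    by_cases hrm : (r : ℕ) < m
    · have := hpath ⟨r, hrm⟩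
      have hc : v (Fin.castSucc ⟨r, hrm⟩) = s := by
        have : Fin.castSucc (⟨r, hrm⟩ : Fin m) = r := by ext; rfl
        rw [this, hr]
      rw [hc] at this
      exact absurd this (not_lt.mpr (hsink _))
    · have hrl : r = Fin.last m := by
        ext; exact Nat.le_antisymm (Nat.lt_succ_iff.mp r.isLt) (not_lt.mp hrm)
      have h0 : v 0 = s := by rw [hcyc, ← hrl, hr]
      have := hpath ⟨0, hm⟩
      have hc : v (Fin.castSucc ⟨0, hm⟩) = s := by
        have : Fin.castSucc (⟨0, hm⟩ : Fin m) = 0 := by ext; rfl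
        rw [this, h0]
      rw [hc] at this
      exact absurd this (not_lt.mpr (hsink _))
  · push_neg at hs
    apply hacyc
    refine ⟨m, v, hm, ?_, hcyc⟩
    intro r
    have h := hpath r
    have h1 : v (Fin.castSucc r) ≠ s := hs _
    have h2 : v r.succ ≠ s := hs _
    simp only [mutate] at h
    rw [if_neg (by tauto)] at h
    have e1 : max (B (v (Fin.castSucc r)) s) 0 = 0 := by
      have := hsrc (v (Fin.castSucc r))
      have := hskew (v (Fin.castSucc r)) s
      omega
    have e2 : max (-B s (v r.succ)) 0 = 0 := by
      have := hsrc (v r.succ)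
      omega
    rw [e1, e2] at h
    simpa using h
end

section
/- Step 2 decrement: let B : n → n → ℤ be skew-symmetric and acyclic on a finite type n, and suppose every maximal oriented path of B has length exactly L for some L ≥ 2 (an oriented path v_0, …, v_m is maximal if there is no vertex u with B u v_0 > 0 and no vertex w with B v_m w > 0). Let S = {s : B s j ≥ 0 for all j} be the set of sources of B, and let B' be the matrix with B' i j = −B i j if exactly one of i, j lies in S, and B' i j = B i j otherwise (this is the result of mutating B at all of its sources). Then B' is acyclic and every maximal oriented path of B' has length 1 or L − 1. -/
/-- ℕ-indexed version of `IsPath`, easier for concatenation arguments. -/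
def NPath {n : Type*} (B : n → n → ℤ) (m : ℕ) (f : ℕ → n) : Prop :=
  ∀ r, r < m → 0 < B (f r) (f (r + 1))

lemma isPath_of_nPath {n : Type*} (B : n → n → ℤ) (m : ℕ) (f : ℕ → n)
    (h : NPath B m f) : IsPath B m (fun i : Fin (m + 1) => f i.val) := by
  intro r
  simpa [Fin.coe_castSucc, Fin.val_succ] using h r.val r.isLt

lemma nacyclic {n : Type*} (B : n → n → ℤ) (hac : Acyclic B) :
    ∀ (m : ℕ) (f : ℕ → n), 1 ≤ m → NPath B m f → f 0 ≠ f m := by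
  intro m f hm hp heq
  exact hac ⟨m, fun i : Fin (m + 1) => f i.val, hm, isPath_of_nPath B m f hp,
    by simpa [Fin.val_last] using heq⟩

lemma npath_lt_card {n : Type*} [Fintype n] (B : n → n → ℤ) (hac : Acyclic B)
    (m : ℕ) (f : ℕ → n) (hp : NPath B m f) : m < Fintype.card n := by
  have hinj : ∀ i j, i < j → j ≤ m → f i ≠ f j := by
    intro i j hij hjm heq
    apply nacyclic B hac (j - i) (fun r => f (i + r)) (by omega)
    · intro r hr
      have h := hp (i + r) (by omega)
      have e : i + r + 1 = i + (r + 1) := by omega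
      rw [e] at h
      exact h
    · have e : i + (j - i) = j := by omega
      simpa [e] using heq
  have hinj' : Function.Injective (fun i : Fin (m + 1) => f i.val) := by
    intro i j hij
    by_contra hne
    rcases Nat.lt_or_ge i.val j.val with h | h
    · exact hinj i.val j.val h (by omega) hij
    · have h' : j.val < i.val := by
        rcases Nat.lt_or_ge j.val i.val with h' | h'
        · exact h'
        · exact absurd (Fin.ext (by omega)) hne
      exact hinj j.val i.val h' (by omega) hij.symm
  have := Fintype.card_le_of_injective _ hinj'
  simp [Fintype.card_fin] at this
  omega

lemma exists_sink_npath {n : Type*} [Fintype n] (B : n → n → ℤ) (hac : Acyclic B)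
    (x : n) : ∃ (d : ℕ) (w : ℕ → n), w 0 = x ∧ NPath B d w ∧
      ∀ z, B (w d) z ≤ 0 := by
  classical
  set P : ℕ → Prop := fun d => ∃ w : ℕ → n, w 0 = x ∧ NPath B d w with hP
  have hP0 : P 0 := ⟨fun _ => x, rfl, fun r hr => absurd hr (by omega)⟩
  set N := Fintype.card n with hN
  set d := Nat.findGreatest P N with hd
  have hPd : P d := Nat.findGreatest_spec (Nat.zero_le _) hP0
  obtain ⟨w, hw0, hwp⟩ := hPd
  refine ⟨d, w, hw0, hwp, ?_⟩
  intro z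
  by_contra hz
  push_neg at hz
  set w' : ℕ → n := fun r => if r ≤ d then w r else z with hw'
  have hp' : NPath B (d + 1) w' := by
    intro r hr
    rcases Nat.lt_or_ge r d with h | h
    · have e1 : w' r = w r := by simp [hw', (show r ≤ d by omega)]
      have e2 : w' (r + 1) = w (r + 1) := by simp [hw', (show r + 1 ≤ d by omega)]
      rw [e1, e2]; exact hwp r h
    · have hrd : r = d := by omega
      have e1 : w' r = w r := by simp [hw', (show r ≤ d by omega)]
      have e2 : w' (r + 1) = z := by
        simp only [hw']
        rw [if_neg (by omega)]
      rw [e1, e2, hrd]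
      exact hz
  have hlt : d + 1 < N := hN ▸ npath_lt_card B hac (d + 1) w' hp'
  have hle : d + 1 ≤ d := Nat.le_findGreatest (by omega)
    ⟨w', by simp [hw', hw0], hp'⟩
  omega

open scoped Classical in
/-- Step 2 decrement: mutating simultaneously at all sources of an acyclic
quiver all of whose maximal oriented paths have length `L ≥ 2` yields an
acyclic quiver all of whose maximal oriented paths have length `1` or `L - 1`. -/
theorem stmt_9 {n : Type*} [Fintype n] (B B' : n → n → ℤ) (L : ℕ)
    (hskew : SkewSymm B) (hacyc : Acyclic B) (hL : 2 ≤ L)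
    (hmax : ∀ (m : ℕ) (v : Fin (m + 1) → n), 1 ≤ m → IsMaxPath B m v → m = L)
    (hB' : ∀ i j, B' i j =
      if Xor' (∀ k, 0 ≤ B i k) (∀ k, 0 ≤ B j k) then -B i j else B i j) :
    Acyclic B' ∧
      ∀ (m : ℕ) (v : Fin (m + 1) → n), 1 ≤ m → IsMaxPath B' m v →
        m = 1 ∨ m = L - 1 := by
  classical
  set Src : n → Prop := fun x => ∀ k, 0 ≤ B x k with hSrc
  -- the basic edge analysis for B'
  have hedge : ∀ i j, 0 < B' i j →
      (¬ Src i ∧ ¬ Src j ∧ 0 < B i j) ∨ (¬ Src i ∧ Src j ∧ 0 < B j i) := by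
    intro i j h
    rw [hB' i j] at h
    by_cases hi : Src i <;> by_cases hj : Src j
    · rw [if_neg (by rintro (⟨-, h⟩ | ⟨-, h⟩); exacts [h hj, h hi])] at h
      have h1 := hi j
      have h2 := hj i
      have h3 : B i j = -B j i := hskew i j
      omega
    · rw [if_pos (by exact Or.inl ⟨hi, hj⟩)] at h
      have h1 := hi j
      omega
    · rw [if_pos (by exact Or.inr ⟨hj, hi⟩)] at h
      have h3 : B j i = -B i j := hskew j i
      exact Or.inr ⟨hi, hj, by omega⟩
    · rw [if_neg (by rintro (⟨h, -⟩ | ⟨h, -⟩); exacts [hi h, hj h])] at h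
      exact Or.inl ⟨hi, hj, h⟩
  -- maximal-path condition in ℕ-world, for B
  have nmax : ∀ (m : ℕ) (f : ℕ → n), 1 ≤ m → NPath B m f →
      (∀ u, B u (f 0) ≤ 0) → (∀ z, B (f m) z ≤ 0) → m = L := by
    intro m f hm hp hs he
    apply hmax m (fun i : Fin (m + 1) => f i.val) hm
    refine ⟨isPath_of_nPath B m f hp, ?_, ?_⟩
    · rintro ⟨u, hu⟩
      have := hs u
      simp only [Fin.val_zero] at hu
      omega
    · rintro ⟨z, hz⟩
      have := he z
      simp only [Fin.val_last] at hz
      omega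
  constructor
  · -- Acyclicity of B'
    rintro ⟨m, v, hm, hp, hcyc⟩
    have hns : ∀ r : Fin m, ¬ Src (v r.castSucc) := by
      intro r
      rcases hedge _ _ (hp r) with ⟨h1, _, _⟩ | ⟨h1, _, _⟩ <;> exact h1
    have hns' : ∀ r : Fin m, ¬ Src (v r.succ) := by
      intro r
      by_cases hr : r.val + 1 < m
      · have e : r.succ = Fin.castSucc ⟨r.val + 1, hr⟩ := Fin.ext (by simp)
        rw [e]; exact hns _
      · have e : r.succ = Fin.last m := Fin.ext (by simp; omega)
        rw [e, ← hcyc]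
        have e0 : (0 : Fin (m + 1)) = Fin.castSucc ⟨0, by omega⟩ := Fin.ext (by simp)
        rw [e0]; exact hns _
    apply hacyc
    refine ⟨m, v, hm, ?_, hcyc⟩
    intro r
    rcases hedge _ _ (hp r) with ⟨_, _, h3⟩ | ⟨_, h2, _⟩
    · exact h3
    · exact absurd h2 (hns' r)
  · -- maximal B'-paths have length 1 or L - 1
    intro m v hm ⟨hp, hstart, hend⟩
    push_neg at hstart hend
    -- transfer the path to ℕ-world
    set f : ℕ → n := fun r => v ⟨min r m, by omega⟩ with hf
    have hfv : ∀ r (h : r ≤ m), f r = v ⟨r, by omega⟩ := by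
      intro r h
      simp [hf, Nat.min_eq_left h]
    have hnp : NPath B' m f := by
      intro r hr
      have e1 : f r = v (Fin.castSucc ⟨r, hr⟩) := by
        rw [hfv r (by omega)]; congr 1
      have e2 : f (r + 1) = v (Fin.succ ⟨r, hr⟩) := by
        rw [hfv (r + 1) (by omega)]; congr 1
      rw [e1, e2]
      exact hp ⟨r, hr⟩
    have hf0 : f 0 = v 0 := by rw [hfv 0 (by omega)]; congr 1
    have hfm : f m = v (Fin.last m) := by rw [hfv m le_rfl]; rfl
    have hstart' : ∀ u, B' u (f 0) ≤ 0 := by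
      intro u; rw [hf0]; exact hstart u
    have hend' : ∀ z, B' (f m) z ≤ 0 := by
      intro z; rw [hfm]; exact hend z
    -- vertices before the end are non-sources
    have hnS : ∀ r, r < m → ¬ Src (f r) := by
      intro r hr
      rcases hedge _ _ (hnp r hr) with ⟨h1, _, _⟩ | ⟨h1, _, _⟩ <;> exact h1
    -- a source pointing into f 0
    obtain ⟨s', hs'src, hs'e⟩ : ∃ s', Src s' ∧ 0 < B s' (f 0) := by
      have h0 := hnS 0 (by omega)
      simp only [hSrc] at h0
      push_neg at h0
      obtain ⟨k, hk⟩ := h0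
      have hk' : 0 < B k (f 0) := by have := hskew k (f 0); omega
      refine ⟨k, ?_, hk'⟩
      by_contra hknot
      have : B' k (f 0) = B k (f 0) := by
        rw [hB', if_neg]
        rintro (⟨h, -⟩ | ⟨h, -⟩)
        exacts [hknot h, hnS 0 (by omega) h]
      have := hstart' k
      omega
    by_cases hS : Src (f m)
    · -- Case A: the endpoint is a source; then m = 1
      left
      by_contra hm1
      have hm2 : 2 ≤ m := by omega
      -- last B'-edge is a reversed B-edge from the source f m
      have hlast : 0 < B (f m) (f (m - 1)) := by
        have h := hnp (m - 1) (by omega)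
        have e : m - 1 + 1 = m := by omega
        rw [e] at h
        rcases hedge _ _ h with ⟨_, h2, _⟩ | ⟨_, _, h3⟩
        · exact absurd hS h2
        · exact h3
      -- interior edges are B-edges
      have hmid : ∀ r, r < m - 1 → 0 < B (f r) (f (r + 1)) := by
        intro r hr
        rcases hedge _ _ (hnp r (by omega)) with ⟨_, _, h3⟩ | ⟨_, h2, _⟩
        · exact h3
        · exact absurd h2 (hnS (r + 1) (by omega))
      obtain ⟨d, w, hw0, hwp, hwsink⟩ := exists_sink_npath B hacyc (f (m - 1))
      -- path 1: s', f 0, ..., f (m-1), w 1, ..., w d : length m + d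
      set h1 : ℕ → n := fun r =>
        if r = 0 then s' else if r ≤ m then f (r - 1) else w (r - m) with hh1
      have h1_0 : h1 0 = s' := by simp [hh1]
      have h1_mid : ∀ r, 1 ≤ r → r ≤ m → h1 r = f (r - 1) := by
        intro r ha hb
        simp only [hh1]
        rw [if_neg (by omega), if_pos hb]
      have h1_hi : ∀ r, m ≤ r → h1 r = w (r - m) := by
        intro r hr
        rcases Nat.eq_or_lt_of_le hr with h | h
        · rw [← h, h1_mid m (by omega) le_rfl]
          have : m - m = 0 := by omega
          rw [this, hw0]
        · simp only [hh1]
          rw [if_neg (by omega), if_neg (by omega)]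
      have hp1 : NPath B (m + d) h1 := by
        intro r hr
        rcases Nat.eq_zero_or_pos r with h0 | h0
        · subst h0
          rw [h1_0, h1_mid 1 le_rfl (by omega)]
          simpa using hs'e
        · rcases Nat.lt_or_ge r (m - 1) with h | h
          · rw [h1_mid r h0 (by omega), h1_mid (r + 1) (by omega) (by omega)]
            have := hmid (r - 1) (by omega)
            have e : r - 1 + 1 = r := by omega
            rw [e] at this
            have e2 : r + 1 - 1 = r := by omega
            rw [e2]
            exact this
          · rcases Nat.lt_or_ge r m with h' | h'
            · -- r = m - 1 : edge from f (m-2) to f (m-1)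
              have hrm : r = m - 1 := by omega
              rw [h1_mid r h0 (by omega), h1_mid (r + 1) (by omega) (by omega)]
              have := hmid (r - 1) (by omega)
              have e : r - 1 + 1 = r := by omega
              rw [e] at this
              have e2 : r + 1 - 1 = r := by omega
              rw [e2]
              exact this
            · rw [h1_hi r h', h1_hi (r + 1) (by omega)]
              have := hwp (r - m) (by omega)
              have e : r + 1 - m = r - m + 1 := by omega
              rw [e]
              exact this
      have hlen1 : m + d = L := by
        apply nmax (m + d) h1 (by omega) hp1
        · intro u
          rw [h1_0]
          have := hs'src u
          have := hskew u s'
          omega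
        · intro z
          rw [h1_hi (m + d) (by omega)]
          have e : m + d - m = d := by omega
          rw [e]
          exact hwsink z
      -- path 2: f m, w 0, ..., w d : length d + 1
      set h2 : ℕ → n := fun r => if r = 0 then f m else w (r - 1) with hh2
      have h2_0 : h2 0 = f m := by simp [hh2]
      have h2_hi : ∀ r, 1 ≤ r → h2 r = w (r - 1) := by
        intro r hr
        simp only [hh2]
        rw [if_neg (by omega)]
      have hp2 : NPath B (d + 1) h2 := by
        intro r hr
        rcases Nat.eq_zero_or_pos r with h0 | h0
        · subst h0
          rw [h2_0, h2_hi 1 le_rfl]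
          simpa [hw0] using hlast
        · rw [h2_hi r h0, h2_hi (r + 1) (by omega)]
          have := hwp (r - 1) (by omega)
          have e : r + 1 - 1 = r - 1 + 1 := by omega
          rw [e]
          exact this
      have hlen2 : d + 1 = L := by
        apply nmax (d + 1) h2 (by omega) hp2
        · intro u
          rw [h2_0]
          have := hS u
          have := hskew u (f m)
          omega
        · intro z
          rw [h2_hi (d + 1) (by omega)]
          have e : d + 1 - 1 = d := by omega
          rw [e]
          exact hwsink z
      omega
    · -- Case B: the endpoint is not a source; then m = L - 1
      right
      -- all edges of the B'-path are B-edges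
      have hall : ∀ r, r < m → 0 < B (f r) (f (r + 1)) := by
        intro r hr
        rcases hedge _ _ (hnp r hr) with ⟨_, _, h3⟩ | ⟨_, h2, _⟩
        · exact h3
        · rcases Nat.lt_or_ge (r + 1) m with h | h
          · exact absurd h2 (hnS (r + 1) h)
          · have e : r + 1 = m := by omega
            rw [e] at h2
            exact absurd h2 hS
      -- f m is a sink of B
      have hsink : ∀ z, B (f m) z ≤ 0 := by
        intro z
        by_contra hz
        push_neg at hz
        have hzns : ¬ Src z := by
          intro hzsrc
          have := hzsrc (f m)
          have := hskew z (f m)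
          omega
        have : B' (f m) z = B (f m) z := by
          rw [hB', if_neg]
          rintro (⟨h, -⟩ | ⟨h, -⟩)
          exacts [hS h, hzns h]
        have := hend' z
        omega
      -- the path s', f 0, ..., f m is maximal in B; length m + 1 = L
      set h3 : ℕ → n := fun r => if r = 0 then s' else f (r - 1) with hh3
      have h3_0 : h3 0 = s' := by simp [hh3]
      have h3_hi : ∀ r, 1 ≤ r → h3 r = f (r - 1) := by
        intro r hr
        simp only [hh3]
        rw [if_neg (by omega)]
      have hp3 : NPath B (m + 1) h3 := by
        intro r hr
        rcases Nat.eq_zero_or_pos r with h0 | h0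
        · subst h0
          rw [h3_0, h3_hi 1 le_rfl]
          simpa using hs'e
        · rw [h3_hi r h0, h3_hi (r + 1) (by omega)]
          have := hall (r - 1) (by omega)
          have e : r - 1 + 1 = r := by omega
          rw [e] at this
          have e2 : r + 1 - 1 = r := by omega
          rw [e2]
          exact this
      have hlen : m + 1 = L := by
        apply nmax (m + 1) h3 (by omega) hp3
        · intro u
          rw [h3_0]
          have := hs'src u
          have := hskew u s'
          omega
        · intro z
          rw [h3_hi (m + 1) (by omega)]
          have e : m + 1 - 1 = m := by omega
          rw [e]
          exact hsink z
      omega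
end

section
/- An acyclic quiver in which all maximal oriented paths have equal length is mutation equivalent to a bipartite quiver: let B : n → n → ℤ be skew-symmetric and acyclic on a finite type n, and suppose there is ℓ ≥ 1 such that every maximal oriented path of B has length exactly ℓ (an oriented path v_0, …, v_m is maximal if there is no vertex u with B u v_0 > 0 and no vertex w with B v_m w > 0). Then B is mutation equivalent to a bipartite skew-symmetric matrix C : n → n → ℤ. -/
namespace Stmt11

variable {n : Type*}

/-- Paths indexed by ℕ for easy concatenation. -/
def NPath (B : n → n → ℤ) (m : ℕ) (v : ℕ → n) : Prop :=
  ∀ r, r < m → 0 < B (v r) (v (r + 1))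

lemma npath_toFin {B : n → n → ℤ} {m : ℕ} {v : ℕ → n} (h : NPath B m v) :
    IsPath B m (fun i : Fin (m + 1) => v i.val) := by
  intro r
  have := h r.val r.isLt
  simpa using this

/-- Concatenation of ℕ-indexed paths. -/
def cat (m : ℕ) (u w : ℕ → n) : ℕ → n := fun r => if r < m then u r else w (r - m)

lemma cat_zero {m : ℕ} {u w : ℕ → n} (he : u m = w 0) : cat m u w 0 = u 0 := by
  unfold cat
  rcases Nat.eq_zero_or_pos m with hm | hm
  · simp [hm, ← he]
  · simp [hm]

lemma cat_last {m m' : ℕ} (u w : ℕ → n) : cat m u w (m + m') = w m' := by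
  unfold cat
  simp

lemma npath_cat {B : n → n → ℤ} {m m' : ℕ} {u w : ℕ → n} (hu : NPath B m u)
    (hw : NPath B m' w) (he : u m = w 0) : NPath B (m + m') (cat m u w) := by
  intro r hr
  unfold cat
  rcases lt_trichotomy (r + 1) m with h1 | h1 | h1
  · have h0 : r < m := by omega
    simp only [if_pos h0, if_pos h1]
    exact hu r h0
  · have h0 : r < m := by omega
    simp only [if_pos h0, if_neg (by omega : ¬ r + 1 < m)]
    have : r + 1 - m = 0 := by omega
    rw [this, ← he, ← h1]
    exact hu r h0
  · have h0 : ¬ r < m := by omega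
    simp only [if_neg h0, if_neg (by omega : ¬ r + 1 < m)]
    have h2 : r + 1 - m = (r - m) + 1 := by omega
    rw [h2]
    exact hw (r - m) (by omega)

/-- The path consisting of a single edge. -/
def epath (i j : n) : ℕ → n := fun r => if r = 0 then i else j

lemma npath_epath {B : n → n → ℤ} {i j : n} (h : 0 < B i j) : NPath B 1 (epath i j) := by
  intro r hr
  have : r = 0 := by omega
  simp [this, epath, h]

lemma npath_bound [Fintype n] {B : n → n → ℤ} (hacyc : Acyclic B) {m : ℕ} {v : ℕ → n}
    (hp : NPath B m v) : m < Fintype.card n := by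
  by_contra hmc
  push_neg at hmc
  obtain ⟨a, b, hab, hv⟩ := Fintype.exists_ne_map_eq_of_card_lt
    (fun i : Fin (m + 1) => v i.val) (by simpa using by omega)
  wlog hlt : a.val < b.val generalizing a b
  · have hne : a.val ≠ b.val := fun h => hab (Fin.ext h)
    exact this b a hab.symm hv.symm (by omega)
  set d := b.val - a.val with hd
  refine hacyc ⟨d, fun r : Fin (d + 1) => v (a.val + r.val), by omega, ?_, ?_⟩
  · intro r
    have hr : a.val + r.val < m := by
      have := r.isLt
      have := b.isLt
      omega
    have := hp (a.val + r.val) hr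
    simpa [Nat.add_assoc] using this
  · simp only [Fin.val_zero, Nat.add_zero, Fin.val_last]
    have : a.val + d = b.val := by omega
    rw [this]
    exact hv

variable [Fintype n]

/-- Height: length of a longest path ending at `v`. -/
noncomputable def ht (B : n → n → ℤ) (v : n) : ℕ :=
  @Nat.findGreatest (fun m => ∃ u : ℕ → n, NPath B m u ∧ u m = v)
    (Classical.decPred _) (Fintype.card n)

/-- Length of a longest path starting at `v`. -/
noncomputable def fh (B : n → n → ℤ) (v : n) : ℕ :=
  @Nat.findGreatest (fun m => ∃ u : ℕ → n, NPath B m u ∧ u 0 = v)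
    (Classical.decPred _) (Fintype.card n)

lemma ht_spec (B : n → n → ℤ) (v : n) :
    ∃ u : ℕ → n, NPath B (ht B v) u ∧ u (ht B v) = v := by
  have h0 : ∃ u : ℕ → n, NPath B 0 u ∧ u 0 = v :=
    ⟨fun _ => v, fun r hr => absurd hr (by omega), rfl⟩
  letI := Classical.decPred (fun m => ∃ u : ℕ → n, NPath B m u ∧ u m = v)
  letI := Classical.decPred (fun m => ∃ u : ℕ → n, NPath B m u ∧ u 0 = v)
  exact Nat.findGreatest_spec (P := fun m => ∃ u : ℕ → n, NPath B m u ∧ u m = v)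
    (Nat.zero_le (Fintype.card n)) h0

lemma le_ht {B : n → n → ℤ} (hacyc : Acyclic B) {v : n} {m : ℕ}
    (h : ∃ u : ℕ → n, NPath B m u ∧ u m = v) : m ≤ ht B v := by
  obtain ⟨u, hu, hue⟩ := h
  letI := Classical.decPred (fun m => ∃ u : ℕ → n, NPath B m u ∧ u m = v)
  letI := Classical.decPred (fun m => ∃ u : ℕ → n, NPath B m u ∧ u 0 = v)
  exact Nat.le_findGreatest (le_of_lt (npath_bound hacyc hu)) ⟨u, hu, hue⟩

lemma fh_spec (B : n → n → ℤ) (v : n) :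
    ∃ u : ℕ → n, NPath B (fh B v) u ∧ u 0 = v := by
  have h0 : ∃ u : ℕ → n, NPath B 0 u ∧ u 0 = v :=
    ⟨fun _ => v, fun r hr => absurd hr (by omega), rfl⟩
  letI := Classical.decPred (fun m => ∃ u : ℕ → n, NPath B m u ∧ u m = v)
  letI := Classical.decPred (fun m => ∃ u : ℕ → n, NPath B m u ∧ u 0 = v)
  exact Nat.findGreatest_spec (P := fun m => ∃ u : ℕ → n, NPath B m u ∧ u 0 = v)
    (Nat.zero_le (Fintype.card n)) h0

lemma le_fh {B : n → n → ℤ} (hacyc : Acyclic B) {v : n} {m : ℕ}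
    (h : ∃ u : ℕ → n, NPath B m u ∧ u 0 = v) : m ≤ fh B v := by
  obtain ⟨u, hu, hue⟩ := h
  letI := Classical.decPred (fun m => ∃ u : ℕ → n, NPath B m u ∧ u m = v)
  letI := Classical.decPred (fun m => ∃ u : ℕ → n, NPath B m u ∧ u 0 = v)
  exact Nat.le_findGreatest (le_of_lt (npath_bound hacyc hu)) ⟨u, hu, hue⟩

/-- Every vertex admits a path to a sink. -/
lemma ext_to_sink {B : n → n → ℤ} (hacyc : Acyclic B) (v : n) :
    ∃ (m : ℕ) (w : ℕ → n), NPath B m w ∧ w 0 = v ∧ ∀ z, B (w m) z ≤ 0 := by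
  have main : ∀ k, ∀ v : n, fh B v = k →
      ∃ (m : ℕ) (w : ℕ → n), NPath B m w ∧ w 0 = v ∧ ∀ z, B (w m) z ≤ 0 := by
    intro k
    induction k using Nat.strong_induction_on with
    | _ k IH =>
      intro v hv
      by_cases hsink : ∀ z, B v z ≤ 0
      · exact ⟨0, fun _ => v, fun r hr => absurd hr (by omega), rfl, hsink⟩
      · push_neg at hsink
        obtain ⟨z, hz⟩ := hsink
        -- fh B z < fh B v
        have hlt : fh B z < fh B v := by
          obtain ⟨u, hu, hu0⟩ := fh_spec B z
          have : fh B z + 1 ≤ fh B v := by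
            refine le_fh hacyc ⟨cat 1 (epath v z) u, ?_, ?_⟩
            · have : NPath B (1 + fh B z) (cat 1 (epath v z) u) :=
                npath_cat (npath_epath hz) hu (by simp [epath, hu0])
              simpa [Nat.add_comm] using this
            · exact cat_zero (by simp [epath, hu0])
          omega
        obtain ⟨m, w, hw, hw0, hwsink⟩ := IH (fh B z) (by omega) z rfl
        refine ⟨1 + m, cat 1 (epath v z) w, npath_cat (npath_epath hz) hw (by simp [epath, hw0]),
          cat_zero (by simp [epath, hw0]), ?_⟩
        rw [cat_last]
        exact hwsink
  exact main (fh B v) v rfl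

/-- A realizer of `ht` starts at a source. -/
lemma ht_realizer {B : n → n → ℤ} (hacyc : Acyclic B) (v : n) :
    ∃ u : ℕ → n, NPath B (ht B v) u ∧ u (ht B v) = v ∧ ∀ z, B z (u 0) ≤ 0 := by
  obtain ⟨u, hu, hue⟩ := ht_spec B v
  refine ⟨u, hu, hue, ?_⟩
  by_contra hsrc
  push_neg at hsrc
  obtain ⟨z, hz⟩ := hsrc
  have : 1 + ht B v ≤ ht B v := by
    refine le_ht hacyc ⟨cat 1 (epath z (u 0)) u, npath_cat (npath_epath hz) hu (by simp [epath]),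
      ?_⟩
    rw [cat_last, hue]
  omega


/-- A path from a source to a sink is maximal, hence has length `ℓ`. -/
lemma maxlen {B : n → n → ℤ} {ℓ : ℕ}
    (hmax : ∀ (m : ℕ) (v : Fin (m + 1) → n), 1 ≤ m → IsMaxPath B m v → m = ℓ)
    {m : ℕ} {p : ℕ → n} (hp : NPath B m p) (hm : 1 ≤ m)
    (hsrc : ∀ z, B z (p 0) ≤ 0) (hsnk : ∀ z, B (p m) z ≤ 0) : m = ℓ := by
  refine hmax m (fun i : Fin (m + 1) => p i.val) hm ⟨npath_toFin hp, ?_, ?_⟩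
  · rintro ⟨u, hu⟩
    simp only [Fin.val_zero] at hu
    exact absurd hu (not_lt.mpr (hsrc u))
  · rintro ⟨w, hw⟩
    simp only [Fin.val_last] at hw
    exact absurd hw (not_lt.mpr (hsnk w))

/-- Heights are bounded by `ℓ`. -/
lemma ht_le {B : n → n → ℤ} {ℓ : ℕ} (hacyc : Acyclic B)
    (hmax : ∀ (m : ℕ) (v : Fin (m + 1) → n), 1 ≤ m → IsMaxPath B m v → m = ℓ)
    (v : n) : ht B v ≤ ℓ := by
  rcases Nat.eq_zero_or_pos (ht B v) with h0 | h0
  · omega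
  obtain ⟨u, hu, hue, husrc⟩ := ht_realizer hacyc v
  obtain ⟨s, w, hw, hw0, hwsnk⟩ := ext_to_sink hacyc v
  have hcat : NPath B (ht B v + s) (cat (ht B v) u w) := npath_cat hu hw (by rw [hue, hw0])
  have hle : ht B v + s = ℓ := by
    refine maxlen hmax hcat (by omega) ?_ ?_
    · rw [cat_zero (by rw [hue, hw0])]
      exact husrc
    · rw [cat_last]
      exact hwsnk
  omega

/-- The grading property: every arrow increases height by exactly one. -/
lemma ht_grade {B : n → n → ℤ} {ℓ : ℕ} (hskew : SkewSymm B) (hacyc : Acyclic B)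
    (hmax : ∀ (m : ℕ) (v : Fin (m + 1) → n), 1 ≤ m → IsMaxPath B m v → m = ℓ)
    {i j : n} (hij : 0 < B i j) : ht B j = ht B i + 1 := by
  -- lower bound
  obtain ⟨ui, hui, huie, huisrc⟩ := ht_realizer hacyc i
  have hlow : ht B i + 1 ≤ ht B j := by
    refine le_ht hacyc ⟨cat (ht B i) ui (epath i j), npath_cat hui (npath_epath hij)
      (by rw [huie]; rfl), ?_⟩
    rw [cat_last]
    rfl
  -- upper bound, via a common forward extension from j
  obtain ⟨uj, huj, huje, hujsrc⟩ := ht_realizer hacyc j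
  obtain ⟨s, w, hw, hw0, hwsnk⟩ := ext_to_sink hacyc j
  have e1 : ht B j + s = ℓ := by
    refine maxlen hmax (npath_cat huj hw (by rw [huje, hw0])) (by omega) ?_ ?_
    · rw [cat_zero (by rw [huje, hw0])]
      exact hujsrc
    · rw [cat_last]
      exact hwsnk
  have hq : NPath B (ht B i + 1) (cat (ht B i) ui (epath i j)) :=
    npath_cat hui (npath_epath hij) (by rw [huie]; rfl)
  have hqe : cat (ht B i) ui (epath i j) (ht B i + 1) = j := by
    rw [cat_last]; rfl
  have e2 : (ht B i + 1) + s = ℓ := by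
    refine maxlen hmax (npath_cat hq hw (by rw [hqe, hw0])) (by omega) ?_ ?_
    · rw [cat_zero (by rw [hqe, hw0])]
      rw [cat_zero (by rw [huie]; rfl)]
      exact huisrc
    · rw [cat_last]
      exact hwsnk
  omega


section Mutation

variable [DecidableEq n]

/-- Mutation-reachability. -/
def Reach (B C : n → n → ℤ) : Prop := ∃ ks : List n, List.foldl mutate B ks = C

lemma Reach.refl (B : n → n → ℤ) : Reach B B := ⟨[], rfl⟩

lemma Reach.trans {B C D : n → n → ℤ} (h1 : Reach B C) (h2 : Reach C D) : Reach B D := by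
  obtain ⟨ks1, hk1⟩ := h1
  obtain ⟨ks2, hk2⟩ := h2
  exact ⟨ks1 ++ ks2, by rw [List.foldl_append, hk1, hk2]⟩

/-- Sign-twist of a matrix by a count function. -/
def Tw (B : n → n → ℤ) (s : n → ℕ) : n → n → ℤ :=
  fun i j => (-1 : ℤ) ^ (s i + s j) * B i j

lemma tw_skew {B : n → n → ℤ} (hskew : SkewSymm B) (s : n → ℕ) : SkewSymm (Tw B s) := by
  intro i j
  simp only [Tw, hskew i j]
  rw [Nat.add_comm (s i) (s j)]
  ring

lemma tw_congr {B : n → n → ℤ} {s t : n → ℕ} (h : ∀ v, s v = t v) : Tw B s = Tw B t := by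
  funext i j
  simp [Tw, h i, h j]

/-- Mutation at a sink merely reverses the incident arrows. -/
lemma mutate_sink {D : n → n → ℤ} (hskew : SkewSymm D) {k : n} (hk : ∀ j, D k j ≤ 0) :
    mutate D k = fun i j => if i = k ∨ j = k then -D i j else D i j := by
  funext i j
  unfold mutate
  split
  · rfl
  · have h1 : max (D k j) 0 = 0 := max_eq_right (hk j)
    have h2 : max (-D i k) 0 = 0 := max_eq_right (by have := hskew k i; have := hk i; omega)
    rw [h1, h2]
    ring

/-- Folding mutation over a list of same-level vertices in a graded twisted matrix. -/
lemma level_fold {B : n → n → ℤ} (hskew : SkewSymm B) (f : n → ℕ)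
    (hgr : ∀ i j, 0 < B i j → f j = f i + 1) (c : ℕ → ℕ) (k : ℕ)
    (Hup : ∀ i j, f i = k → 0 < B i j → Odd (c k + c (f j)))
    (Hdown : ∀ i j, f i = k → B i j < 0 → Even (c k + c (f j))) :
    ∀ L : List n, L.Nodup → (∀ v ∈ L, f v = k) → ∀ S : Finset n,
      (∀ v ∈ S, f v = k) → (∀ v ∈ L, v ∉ S) →
      List.foldl mutate (Tw B (fun v => c (f v) + (if v ∈ S then 1 else 0))) L
        = Tw B (fun v => c (f v) + (if v ∈ S ∨ v ∈ L then 1 else 0)) := by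
  intro L
  induction L with
  | nil =>
    intro _ _ S hS _
    simp
  | cons v L' IH =>
    intro hnd hL S hS hLS
    have hfv : f v = k := hL v (List.mem_cons_self)
    have hvS : v ∉ S := hLS v (List.mem_cons_self)
    set M := Tw B (fun w => c (f w) + (if w ∈ S then 1 else 0)) with hM
    have hMskew : SkewSymm M := tw_skew hskew _
    -- v is a sink of M
    have hsink : ∀ j, M v j ≤ 0 := by
      intro j
      rcases lt_trichotomy (B v j) 0 with hB | hB | hB
      · -- incoming arrow : f v = f j + 1, so j ∉ S, and the sign is +1
        have hji : 0 < B j v := by have := hskew v j; omega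
        have hfj : f v = f j + 1 := hgr j v hji
        have hjS : j ∉ S := fun hj => by have := hS j hj; omega
        have hev : Even (c k + c (f j)) := Hdown v j hfv hB
        have hMj : M v j = (-1 : ℤ) ^ (c (f v) + c (f j)) * B v j := by
          simp [hM, Tw, if_neg hvS, if_neg hjS]
        rw [hMj, hfv, hev.neg_one_pow, one_mul]
        omega
      · simp [hM, Tw, hB]
      · have hfj : f j = f v + 1 := hgr v j hB
        have hjS : j ∉ S := fun hj => by have := hS j hj; omega
        have hodd : Odd (c k + c (f j)) := Hup v j hfv hB
        have hMj : M v j = (-1 : ℤ) ^ (c (f v) + c (f j)) * B v j := by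
          simp [hM, Tw, if_neg hvS, if_neg hjS]
        rw [hMj, hfv, hodd.neg_one_pow]
        omega
    have hstep : mutate M v = Tw B (fun w => c (f w) + (if w ∈ insert v S then 1 else 0)) := by
      rw [mutate_sink hMskew hsink]
      have hsplit : ∀ w : n, (if w ∈ insert v S then (1:ℕ) else 0)
          = (if w ∈ S then 1 else 0) + (if w = v then 1 else 0) := by
        intro w
        by_cases h1 : w = v
        · subst h1
          simp [hvS]
        · by_cases h2 : w ∈ S <;> simp [Finset.mem_insert, h1, h2]
      have key : ∀ i j : n, Tw B (fun w => c (f w) + (if w ∈ insert v S then 1 else 0)) i j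
          = (-1 : ℤ) ^ ((if i = v then (1:ℕ) else 0) + (if j = v then 1 else 0)) * M i j := by
        intro i j
        simp only [Tw, hM, hsplit]
        rw [← mul_assoc, ← pow_add]
        congr 2
        omega
      funext i j
      rw [key i j]
      by_cases hi : i = v <;> by_cases hj : j = v
      · have hMvv : M i j = 0 := by
          have := hMskew i j
          rw [hi, hj] at this ⊢
          omega
        rw [if_pos (Or.inl hi), hMvv]
        simp
      · rw [if_pos (Or.inl hi), if_pos hi, if_neg hj]
        ring
      · rw [if_pos (Or.inr hj), if_neg hi, if_pos hj]
        ring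
      · rw [if_neg (by tauto), if_neg hi, if_neg hj]
        ring
    have hnd' : L'.Nodup := (List.nodup_cons.mp hnd).2
    have hvL' : v ∉ L' := (List.nodup_cons.mp hnd).1
    have hL' : ∀ w ∈ L', f w = k := fun w hw => hL w (List.mem_cons_of_mem v hw)
    have hS' : ∀ w ∈ insert v S, f w = k := by
      intro w hw
      rcases Finset.mem_insert.mp hw with h | h
      · subst h; exact hfv
      · exact hS w h
    have hLS' : ∀ w ∈ L', w ∉ insert v S := by
      intro w hw hmem
      rcases Finset.mem_insert.mp hmem with h | h
      · subst h; exact hvL' hw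
      · exact hLS w (List.mem_cons_of_mem v hw) h
    calc List.foldl mutate M (v :: L')
        = List.foldl mutate (mutate M v) L' := rfl
      _ = Tw B (fun w => c (f w) + (if w ∈ insert v S ∨ w ∈ L' then 1 else 0)) := by
          rw [hstep]; exact IH hnd' hL' (insert v S) hS' hLS'
      _ = Tw B (fun w => c (f w) + (if w ∈ S ∨ w ∈ v :: L' then 1 else 0)) := by
          refine tw_congr fun w => ?_
          congr 1
          have : (w ∈ insert v S ∨ w ∈ L') ↔ (w ∈ S ∨ w ∈ v :: L') := by
            simp only [Finset.mem_insert, List.mem_cons]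
            tauto
          simp only [this]

/-- Mutating all vertices of level `k`. -/
lemma level_reach {B : n → n → ℤ} (hskew : SkewSymm B) (f : n → ℕ)
    (hgr : ∀ i j, 0 < B i j → f j = f i + 1) (c : ℕ → ℕ) (k : ℕ)
    (Hup : ∀ i j, f i = k → 0 < B i j → Odd (c k + c (f j)))
    (Hdown : ∀ i j, f i = k → B i j < 0 → Even (c k + c (f j)))
    (hR : Reach B (Tw B (fun v => c (f v)))) :
    Reach B (Tw B (fun v => Function.update c k (c k + 1) (f v))) := by
  classical
  set L := (Finset.univ.filter (fun v : n => f v = k)).toList with hLdef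
  have hmemL : ∀ v : n, v ∈ L ↔ f v = k := by
    intro v
    simp [hLdef, Finset.mem_toList]
  have h1 := level_fold hskew f hgr c k Hup Hdown L (Finset.nodup_toList _)
    (fun v hv => (hmemL v).mp hv) ∅ (by simp) (by simp)
  refine hR.trans ⟨L, ?_⟩
  have e1 : Tw B (fun v => c (f v) + (if v ∈ (∅ : Finset n) then 1 else 0))
      = Tw B (fun v => c (f v)) := tw_congr (by simp)
  rw [← e1, h1]
  refine tw_congr fun v => ?_
  by_cases hv : f v = k
  · rw [hv, Function.update_self]
    simp [hmemL, hv]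
  · rw [Function.update_of_ne hv]
    simp [hmemL, hv]



/-- The count function during stage `s+1`, about to process level `k`. -/
def cs (ℓ s k : ℕ) : ℕ → ℕ := fun m => min s (m / 2) + (if k < m ∧ m ≤ ℓ then 1 else 0)

lemma stage_step {B : n → n → ℤ} {ℓ : ℕ} (hskew : SkewSymm B) (f : n → ℕ)
    (hgr : ∀ i j, 0 < B i j → f j = f i + 1) (hle : ∀ v, f v ≤ ℓ) {s k : ℕ}
    (hk1 : 2 * s + 2 ≤ k) (hk2 : k ≤ ℓ)
    (hR : Reach B (Tw B (fun v => cs ℓ s k (f v)))) :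
    Reach B (Tw B (fun v => cs ℓ s (k - 1) (f v))) := by
  have Hup : ∀ i j, f i = k → 0 < B i j → Odd (cs ℓ s k k + cs ℓ s k (f j)) := by
    intro i j hfi hij
    have hfj : f j = k + 1 := by rw [hgr i j hij, hfi]
    have hjle : f j ≤ ℓ := hle j
    rw [hfj] at hjle ⊢
    simp only [cs]
    rw [Nat.odd_iff]
    split_ifs <;> omega
  have Hdown : ∀ i j, f i = k → B i j < 0 → Even (cs ℓ s k k + cs ℓ s k (f j)) := by
    intro i j hfi hij
    have hji : 0 < B j i := by have := hskew i j; omega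
    have hfj : f j + 1 = k := by rw [← hfi, hgr j i hji]
    simp only [cs]
    rw [Nat.even_iff]
    split_ifs <;> omega
  have h := level_reach hskew f hgr (cs ℓ s k) k Hup Hdown hR
  have heq : Tw B (fun v => Function.update (cs ℓ s k) k (cs ℓ s k k + 1) (f v))
      = Tw B (fun v => cs ℓ s (k - 1) (f v)) := by
    refine tw_congr fun v => ?_
    by_cases hv : f v = k
    · rw [hv, Function.update_self]
      simp only [cs]
      split_ifs <;> omega
    · rw [Function.update_of_ne hv]
      simp only [cs]
      have : (k < f v ∧ f v ≤ ℓ) ↔ (k - 1 < f v ∧ f v ≤ ℓ) := by omega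
      split_ifs with h1 h2 h2 <;> omega
  rwa [heq] at h

lemma stage_desc {B : n → n → ℤ} {ℓ : ℕ} (hskew : SkewSymm B) (f : n → ℕ)
    (hgr : ∀ i j, 0 < B i j → f j = f i + 1) (hle : ∀ v, f v ≤ ℓ) (s : ℕ) :
    ∀ d k, k = 2 * s + 1 + d → k ≤ ℓ → Reach B (Tw B (fun v => cs ℓ s k (f v))) →
      Reach B (Tw B (fun v => cs ℓ s (2 * s + 1) (f v))) := by
  intro d
  induction d with
  | zero =>
    intro k hk _ hR
    rw [hk] at hR
    simpa using hR
  | succ d IH =>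
    intro k hk hkℓ hR
    have h1 : 2 * s + 2 ≤ k := by omega
    have h2 := stage_step hskew f hgr hle h1 hkℓ hR
    exact IH (k - 1) (by omega) (by omega) h2

lemma stages {B : n → n → ℤ} {ℓ : ℕ} (hskew : SkewSymm B) (f : n → ℕ)
    (hgr : ∀ i j, 0 < B i j → f j = f i + 1) (hle : ∀ v, f v ≤ ℓ) :
    ∀ s, 2 * s ≤ ℓ → Reach B (Tw B (fun v => min s (f v / 2))) := by
  intro s
  induction s with
  | zero =>
    intro _
    have : Tw B (fun v => min 0 (f v / 2)) = B := by
      funext i j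
      simp [Tw]
    rw [this]
    exact Reach.refl B
  | succ s IH =>
    intro hs
    have hprev := IH (by omega)
    have e1 : Tw B (fun v => min s (f v / 2)) = Tw B (fun v => cs ℓ s ℓ (f v)) := by
      refine tw_congr fun v => ?_
      simp only [cs]
      have := hle v
      split_ifs <;> omega
    rw [e1] at hprev
    have h2 := stage_desc hskew f hgr hle s (ℓ - (2 * s + 1)) ℓ (by omega) le_rfl hprev
    have e2 : Tw B (fun v => cs ℓ s (2 * s + 1) (f v)) = Tw B (fun v => min (s + 1) (f v / 2)) := by
      refine tw_congr fun v => ?_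
      simp only [cs]
      have := hle v
      split_ifs <;> omega
    rwa [e2] at h2

end Mutation

end Stmt11

/-- An acyclic quiver all of whose maximal oriented paths have the same length
is mutation equivalent to a bipartite quiver. -/
theorem stmt_11 {n : Type*} [Fintype n] [DecidableEq n] (B : n → n → ℤ) (ℓ : ℕ)
    (hskew : SkewSymm B) (hacyc : Acyclic B) (hℓ : 1 ≤ ℓ)
    (hmax : ∀ (m : ℕ) (v : Fin (m + 1) → n), 1 ≤ m → IsMaxPath B m v → m = ℓ) :
    ∃ C : n → n → ℤ, SkewSymm C ∧ Bipartite C ∧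
      ∃ ks : List n, List.foldl mutate B ks = C := by
  open Stmt11 in
  have hgr : ∀ i j, 0 < B i j → ht B j = ht B i + 1 :=
    fun i j h => ht_grade hskew hacyc hmax h
  have hle : ∀ v, ht B v ≤ ℓ := fun v => ht_le hacyc hmax v
  obtain ⟨ks, hks⟩ := stages hskew (ht B) hgr hle (ℓ / 2) (by omega)
  refine ⟨Tw B (fun v => min (ℓ / 2) (ht B v / 2)), tw_skew hskew _, ?_, ks, hks⟩
  intro k
  rcases Nat.even_or_odd (ht B k) with hpar | hpar
  · left
    intro j
    show 0 ≤ (-1 : ℤ) ^ (min (ℓ / 2) (ht B k / 2) + min (ℓ / 2) (ht B j / 2)) * B k j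
    rcases lt_trichotomy (B k j) 0 with h | h | h
    · have hjk : 0 < B j k := by have := hskew k j; omega
      have h1 : ht B k = ht B j + 1 := hgr j k hjk
      have hodd : Odd (min (ℓ / 2) (ht B k / 2) + min (ℓ / 2) (ht B j / 2)) := by
        rw [Nat.odd_iff]
        rw [Nat.even_iff] at hpar
        have := hle k
        have := hle j
        omega
      rw [hodd.neg_one_pow]
      omega
    · rw [h]
      simp
    · have h1 : ht B j = ht B k + 1 := hgr k j h
      have heven : Even (min (ℓ / 2) (ht B k / 2) + min (ℓ / 2) (ht B j / 2)) := by
        rw [Nat.even_iff]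
        rw [Nat.even_iff] at hpar
        have := hle k
        have := hle j
        omega
      rw [heven.neg_one_pow]
      omega
  · right
    intro j
    show (-1 : ℤ) ^ (min (ℓ / 2) (ht B k / 2) + min (ℓ / 2) (ht B j / 2)) * B k j ≤ 0
    rcases lt_trichotomy (B k j) 0 with h | h | h
    · have hjk : 0 < B j k := by have := hskew k j; omega
      have h1 : ht B k = ht B j + 1 := hgr j k hjk
      have heven : Even (min (ℓ / 2) (ht B k / 2) + min (ℓ / 2) (ht B j / 2)) := by
        rw [Nat.even_iff]
        rw [Nat.odd_iff] at hpar
        have := hle k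
        have := hle j
        omega
      rw [heven.neg_one_pow]
      omega
    · rw [h]
      simp
    · have h1 : ht B j = ht B k + 1 := hgr k j h
      have hodd : Odd (min (ℓ / 2) (ht B k / 2) + min (ℓ / 2) (ht B j / 2)) := by
        rw [Nat.odd_iff]
        rw [Nat.odd_iff] at hpar
        have := hle k
        have := hle j
        omega
      rw [hodd.neg_one_pow]
      omega
end
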